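/- Let W be a finite-dimensional real vector space, L ⊆ W × W* an isotropic subspace for the pairing ⟨(w₁,ξ₁),(w₂,ξ₂)⟩₊ = (1/2)(ξ₁(w₂) + ξ₂(w₁)) with dim L = dim W, and V ⊆ W a subspace such that (V × V⁰) ∩ L = {0}. Then the second projection W × W* → W* restricts to a linear isomorphism from L ∩ (V × W*) onto the annihilator H⁰ of the horizontal space H = {w ∈ W : there exists ξ ∈ V⁰ with (w,ξ) ∈ L}. -/

import Mathlib

/-- The horizontal space of a subspace `L ⊆ W × W*` relative to a subspace `V ⊆ W`:
`H = {w ∈ W : ∃ ξ ∈ V⁰, (w, ξ) ∈ L}`. -/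
def horizontalSpace {W : Type*} [AddCommGroup W] [Module ℝ W]
    (L : Submodule ℝ (W × Module.Dual ℝ W)) (V : Submodule ℝ W) :
    Submodule ℝ W where
  carrier := {w | ∃ ξ ∈ V.dualAnnihilator, (w, ξ) ∈ L}
  add_mem' := by
    rintro a b ⟨ξ, hξ, hL⟩ ⟨η, hη, hL'⟩
    exact ⟨ξ + η, add_mem hξ hη, L.add_mem hL hL'⟩
  zero_mem' := ⟨0, Submodule.zero_mem _, L.zero_mem⟩
  smul_mem' := by
    rintro c a ⟨ξ, hξ, hL⟩
    exact ⟨c • ξ, Submodule.smul_mem _ c hξ, L.smul_mem c hL⟩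

/-- The natural symmetric pairing on `W × W*`:
`⟨(w₁,ξ₁),(w₂,ξ₂)⟩₊ = (1/2)(ξ₁(w₂) + ξ₂(w₁))`. -/
noncomputable def pairPlus {W : Type*} [AddCommGroup W] [Module ℝ W]
    (p q : W × Module.Dual ℝ W) : ℝ :=
  (1 / 2) * (p.2 q.1 + q.2 p.1)

/-- Auxiliary: `p.prod q` is equivalent to `p × q`. -/
def stmt10ProdEquiv {R M M' : Type*} [CommRing R] [AddCommGroup M] [AddCommGroup M']
    [Module R M] [Module R M'] (p : Submodule R M) (q : Submodule R M') :
    (p.prod q) ≃ₗ[R] p × q where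
  toFun x := (⟨x.1.1, x.2.1⟩, ⟨x.1.2, x.2.2⟩)
  invFun x := ⟨(x.1.1, x.2.1), x.1.2, x.2.2⟩
  map_add' _ _ := rfl
  map_smul' _ _ := rfl
  left_inv _ := rfl
  right_inv _ := rfl

lemma stmt10_finrank_prod {M M' : Type*} [AddCommGroup M] [AddCommGroup M']
    [Module ℝ M] [Module ℝ M'] (p : Submodule ℝ M) (q : Submodule ℝ M')
    [FiniteDimensional ℝ p] [FiniteDimensional ℝ q] :
    Module.finrank ℝ (p.prod q) = Module.finrank ℝ p + Module.finrank ℝ q :=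
  (stmt10ProdEquiv p q).finrank_eq.trans Module.finrank_prod

/-- for an isotropic `L` with `dim L = dim W` and `(V × V⁰) ∩ L = {0}`,
the second projection restricts to a linear isomorphism from `L ∩ (V × W*)` onto the
annihilator `H⁰` of the horizontal space. -/
theorem stmt10 {W : Type*} [AddCommGroup W] [Module ℝ W] [FiniteDimensional ℝ W]
    (L : Submodule ℝ (W × Module.Dual ℝ W)) (V : Submodule ℝ W)
    (hiso : ∀ p ∈ L, ∀ q ∈ L, pairPlus p q = 0)
    (hdim : Module.finrank ℝ L = Module.finrank ℝ W)
    (hnd : V.prod V.dualAnnihilator ⊓ L = ⊥) :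
    ∃ e : ↥(L ⊓ V.prod (⊤ : Submodule ℝ (Module.Dual ℝ W))) ≃ₗ[ℝ]
        ↥((horizontalSpace L V).dualAnnihilator),
      ∀ x, (e x : Module.Dual ℝ W) = (x : W × Module.Dual ℝ W).2 := by
  classical
  set n := Module.finrank ℝ W with hn
  set A := V.prod V.dualAnnihilator with hAdef
  set M := L ⊓ V.prod (⊤ : Submodule ℝ (Module.Dual ℝ W)) with hMdef
  set N := L ⊓ (⊤ : Submodule ℝ W).prod V.dualAnnihilator with hNdef
  have hdisj : Disjoint A L := disjoint_iff.mpr hnd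
  have hdualann : Module.finrank ℝ V + Module.finrank ℝ V.dualAnnihilator = n := by
    have h1 := LinearEquiv.finrank_eq (R := ℝ) (M := W ⧸ V)
      (N := V.dualAnnihilator) (Subspace.quotEquivAnnihilator V)
    rw [← h1, add_comm]
    exact Submodule.finrank_quotient_add_finrank V
  have hArank : Module.finrank ℝ A = n := by
    rw [hAdef, stmt10_finrank_prod, hdualann]
  have hProd : Module.finrank ℝ (W × Module.Dual ℝ W) = n + n := by
    rw [Module.finrank_prod, Subspace.dual_finrank_eq]
  have hsup : A ⊔ L = ⊤ :=
    Submodule.eq_top_of_disjoint A L (by rw [hArank, hdim, hProd]) hdisj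
  have hdec : ∀ x : W × Module.Dual ℝ W, ∃ a ∈ A, ∃ l ∈ L, a + l = x := by
    intro x
    have hx : x ∈ A ⊔ L := by rw [hsup]; trivial
    exact Submodule.mem_sup.mp hx
  have hMsup : M ⊔ A = V.prod (⊤ : Submodule ℝ (Module.Dual ℝ W)) := by
    apply le_antisymm
    · exact sup_le inf_le_right (fun x hx => ⟨hx.1, trivial⟩)
    · rintro ⟨v, ξ⟩ ⟨hv, -⟩
      obtain ⟨a, ha, l, hl, hsum⟩ := hdec (v, ξ)
      have hlval : l = (v, ξ) - a := by rw [← hsum]; abel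
      have hlM : l ∈ M := by
        refine ⟨hl, ?_, trivial⟩
        rw [hlval]
        exact Submodule.sub_mem _ hv ha.1
      exact Submodule.mem_sup.mpr ⟨l, hlM, a, ha, by rw [add_comm]; exact hsum⟩
  have hMA : M ⊓ A = ⊥ := by
    rw [← le_bot_iff, ← hnd]
    exact fun x hx => ⟨hx.2, hx.1.1⟩
  have hMrank : Module.finrank ℝ M = Module.finrank ℝ V := by
    have h1 := Submodule.finrank_sup_add_finrank_inf_eq M A
    rw [hMsup, hMA, hArank, stmt10_finrank_prod, finrank_top,
      Subspace.dual_finrank_eq, finrank_bot, add_zero] at h1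
    omega
  have hNsup : N ⊔ A = (⊤ : Submodule ℝ W).prod V.dualAnnihilator := by
    apply le_antisymm
    · exact sup_le inf_le_right (fun x hx => ⟨trivial, hx.2⟩)
    · rintro ⟨w, ξ⟩ ⟨-, hξ⟩
      obtain ⟨a, ha, l, hl, hsum⟩ := hdec (w, ξ)
      have hlval : l = (w, ξ) - a := by rw [← hsum]; abel
      have hlN : l ∈ N := by
        refine ⟨hl, trivial, ?_⟩
        rw [hlval]
        exact Submodule.sub_mem _ hξ ha.2
      exact Submodule.mem_sup.mpr ⟨l, hlN, a, ha, by rw [add_comm]; exact hsum⟩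
  have hNA : N ⊓ A = ⊥ := by
    rw [← le_bot_iff, ← hnd]
    exact fun x hx => ⟨hx.2, hx.1.1⟩
  have hNrank : Module.finrank ℝ N = Module.finrank ℝ V.dualAnnihilator := by
    have h1 := Submodule.finrank_sup_add_finrank_inf_eq N A
    rw [hNsup, hNA, hArank, stmt10_finrank_prod, finrank_top,
      finrank_bot, add_zero] at h1
    omega
  set g : N →ₗ[ℝ] W := (LinearMap.fst ℝ W (Module.Dual ℝ W)).comp N.subtype with hgdef
  have hNkey : ∀ z ∈ N, z.1 = (0 : W) → z = 0 := by
    intro z hz hz1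
    have hzA : z ∈ A := Submodule.mem_prod.mpr
      ⟨by rw [hz1]; exact V.zero_mem, (Submodule.mem_prod.mp hz.2).2⟩
    have hzz : z ∈ A ⊓ L := ⟨hzA, hz.1⟩
    rw [hnd] at hzz
    exact hzz
  have hginj : Function.Injective g := by
    intro x y hxy
    have hxy' : (x : W × Module.Dual ℝ W).1 = (y : W × Module.Dual ℝ W).1 := hxy
    have hz : (x : W × Module.Dual ℝ W) - y ∈ N := N.sub_mem x.2 y.2
    have hz1 : ((x : W × Module.Dual ℝ W) - y).1 = 0 := by
      simp [Prod.fst_sub, hxy', sub_self]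
    have := hNkey _ hz hz1
    exact Subtype.ext (sub_eq_zero.mp this)
  have hgrange : LinearMap.range g = horizontalSpace L V := by
    ext w
    constructor
    · rintro ⟨⟨x, hx⟩, rfl⟩
      exact ⟨x.2, (Submodule.mem_prod.mp hx.2).2, hx.1⟩
    · rintro ⟨ξ, hξ, hL⟩
      exact ⟨⟨(w, ξ), ⟨hL, Submodule.mem_prod.mpr ⟨trivial, hξ⟩⟩⟩, rfl⟩
  have hHrank : Module.finrank ℝ (horizontalSpace L V) = Module.finrank ℝ V.dualAnnihilator := by
    rw [← hgrange, ← hNrank]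
    exact (LinearEquiv.ofInjective g hginj).finrank_eq.symm
  have hHannrank : Module.finrank ℝ (horizontalSpace L V).dualAnnihilator
      = Module.finrank ℝ V := by
    have h1 := LinearEquiv.finrank_eq (R := ℝ) (M := W ⧸ horizontalSpace L V)
      (N := (horizontalSpace L V).dualAnnihilator)
      (Subspace.quotEquivAnnihilator (horizontalSpace L V))
    have h2 := Submodule.finrank_quotient_add_finrank (horizontalSpace L V)
    rw [h1, hHrank] at h2
    omega
  have hmem : ∀ x : M, (x : W × Module.Dual ℝ W).2 ∈ (horizontalSpace L V).dualAnnihilator := by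
    rintro ⟨x, hxL, hxP⟩
    have hxV : x.1 ∈ V := (Submodule.mem_prod.mp hxP).1
    rw [Submodule.mem_dualAnnihilator _]
    rintro w ⟨ξ, hξ, hwL⟩
    have h0 := hiso x hxL (w, ξ) hwL
    rw [pairPlus] at h0
    have hξx : ξ x.1 = 0 := (Submodule.mem_dualAnnihilator ξ).mp hξ x.1 hxV
    simp only [hξx] at h0
    linarith
  set φ : M →ₗ[ℝ] (horizontalSpace L V).dualAnnihilator :=
    { toFun := fun x => ⟨(x : W × Module.Dual ℝ W).2, hmem x⟩
      map_add' := fun x y => rfl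
      map_smul' := fun c x => rfl } with hφdef
  have hMkey : ∀ z ∈ M, z.2 = (0 : Module.Dual ℝ W) → z = 0 := by
    intro z hz hz2
    have hzA : z ∈ A := Submodule.mem_prod.mpr
      ⟨(Submodule.mem_prod.mp hz.2).1, by rw [hz2]; exact Submodule.zero_mem _⟩
    have hzz : z ∈ A ⊓ L := ⟨hzA, hz.1⟩
    rw [hnd] at hzz
    exact hzz
  have hφinj : Function.Injective φ := by
    intro x y hxy
    have hxy' : (x : W × Module.Dual ℝ W).2 = (y : W × Module.Dual ℝ W).2 :=
      congrArg Subtype.val hxy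
    have hz : (x : W × Module.Dual ℝ W) - y ∈ M := M.sub_mem x.2 y.2
    have hz2 : ((x : W × Module.Dual ℝ W) - y).2 = 0 := by
      simp [Prod.snd_sub, hxy', sub_self]
    have := hMkey _ hz hz2
    exact Subtype.ext (sub_eq_zero.mp this)
  refine ⟨LinearMap.linearEquivOfInjective (K := ℝ) (V := M) (V₂ := (horizontalSpace L V).dualAnnihilator) φ hφinj (by rw [hMrank, hHannrank] : Module.finrank ℝ M = Module.finrank ℝ (horizontalSpace L V).dualAnnihilator), ?_⟩
  intro x
  rw [LinearMap.linearEquivOfInjective_apply]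
  rfl
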